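/- Let q be even, let J = {j_0,...,j_{k-1}} and I = {i_0,...,i_{m-k-1}} partition {0,1,...,m-1}, write x = (x_{j_0},...,x_{j_{k-1}}), and let d ∈ Z_2^k. Let f : Z_2^m → Z_q be a generalized Boolean function such that the restricted function f|_{x=d} equals (q/2)·Σ_{α=0}^{m-k-2} x_{π(α)} x_{π(α+1)} + Σ_{α=0}^{m-k-1} c_α x_{i_α} + c, where c_0,...,c_{m-k-1}, c ∈ Z_q and π is a bijection from {0,1,...,m-k-1} onto I. Let a be either π(0) or π(m-k-1), let c' ∈ Z_q, and let F and F' be the polyphase vectors associated with f and with f + (q/2)x_a + c', respectively. Then F|_{x=d} and F'|_{x=d} form a Golay complementary pair: A(F|_{x=d})(ℓ) + A(F'|_{x=d})(ℓ) = 0 for all ℓ ≠ 0. -/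

import Mathlib

open Finset

/-- Aperiodic cross-correlation of two length-`n` complex sequences at integer displacement `ℓ`. -/
noncomputable def crossCorr (n : ℕ) (A B : ℕ → ℂ) (ℓ : ℤ) : ℂ :=
  ∑ i ∈ Finset.range n, ∑ j ∈ Finset.range n,
    if (i : ℤ) = (j : ℤ) + ℓ then A i * (starRingEnd ℂ) (B j) else 0

/-- Aperiodic autocorrelation. -/
noncomputable def autoCorr (n : ℕ) (A : ℕ → ℂ) (ℓ : ℤ) : ℂ := crossCorr n A A ℓ

/-- The binary expansion of `i`, as a point of `ℤ₂^m`. -/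
def bits (m : ℕ) (i : ℕ) : Fin m → ZMod 2 := fun j => if Nat.testBit i j.val then 1 else 0

/-- The polyphase vector `F = ξ^f` associated with `f : ℤ₂^m → ℤ_q`, `ξ = e^{2π√-1/q}`. -/
noncomputable def polyVec {q : ℕ} (m : ℕ) (f : (Fin m → ZMod 2) → ZMod q) : ℕ → ℂ :=
  fun i => Complex.exp (2 * Real.pi * Complex.I * ((f (bits m i)).val : ℂ) / (q : ℂ))

/-- The restriction `F|_{x = d}` of a vector of length `2^m` in the variables `x_{jJ b}`. -/
noncomputable def restrictVec (m k : ℕ) (jJ : Fin k → Fin m) (d : Fin k → ZMod 2)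
    (F : ℕ → ℂ) : ℕ → ℂ :=
  fun i => if ∀ b : Fin k, bits m i (jJ b) = d b then F i else 0


lemma xor_pow_false {P i : ℕ} (h : i.testBit P = false) : i ^^^ 2^P = i + 2^P := by
  induction P generalizing i with
  | zero =>
    have h0 : i % 2 = 0 := by
      have := Nat.testBit_zero i ▸ h
      simpa using this
    have hi : i = Nat.bit false (i/2) := by
      rw [Nat.bit_val]; simp; omega
    rw [hi]
    have : (2:ℕ)^0 = Nat.bit true 0 := by simp [Nat.bit_val]
    rw [this, Nat.xor_bit]
    simp [Nat.bit_val]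
  | succ P ih =>
    have hb : i = Nat.bit (i.testBit 0) (i/2) := by
      rw [Nat.bit_val]
      rcases Nat.mod_two_eq_zero_or_one i with h2 | h2 <;> simp [Nat.testBit_zero, h2] <;> omega
    have hP : (i/2).testBit P = false := by
      have := Nat.testBit_succ i P
      rw [← this] at *
      · exact h
    have h2p : (2:ℕ)^(P+1) = Nat.bit false (2^P) := by simp [Nat.bit_val]; ring
    rw [h2p]
    conv_lhs => rw [hb]
    rw [Nat.xor_bit, ih hP]
    rw [Nat.bit_val, Nat.bit_val]
    conv_rhs => rw [hb, Nat.bit_val]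
    simp
    ring

lemma xor_pow_true {P i : ℕ} (h : i.testBit P = true) : (i ^^^ 2^P) + 2^P = i := by
  have h1 : (i ^^^ 2^P).testBit P = false := by
    simp [Nat.testBit_xor, h, Nat.testBit_two_pow]
  have := xor_pow_false h1
  rw [Nat.xor_xor_cancel_right] at this
  omega

lemma xor_pair_add {P i j : ℕ} (h : i.testBit P = j.testBit P) :
    (i ^^^ 2^P) + j = (j ^^^ 2^P) + i := by
  cases hb : i.testBit P with
  | false => rw [xor_pow_false hb, xor_pow_false (h ▸ hb)]; ring
  | true =>
    have hi := xor_pow_true hb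
    have hj := xor_pow_true (h ▸ hb)
    omega

/-- The additive character `x ↦ exp(2πi x.val / q)`. -/
noncomputable def Ee (q : ℕ) (x : ZMod q) : ℂ :=
  Complex.exp (2 * Real.pi * Complex.I * (x.val : ℂ) / (q : ℂ))

lemma Ee_natCast (q : ℕ) (hq1 : 0 < q) (n : ℕ) :
    Complex.exp (2 * Real.pi * Complex.I * (n : ℂ) / (q : ℂ)) = Ee q (n : ZMod q) := by
  haveI : NeZero q := ⟨hq1.ne'⟩
  rw [Ee, ZMod.val_natCast]
  have hq : (q : ℂ) ≠ 0 := Nat.cast_ne_zero.mpr hq1.ne'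
  have hn : (n : ℂ) = (n % q : ℕ) + (n / q : ℕ) * q := by
    exact_mod_cast (Nat.mod_add_div' n q).symm
  rw [hn]
  have : 2 * Real.pi * Complex.I * ((n % q : ℕ) + (n / q : ℕ) * (q:ℂ)) / (q : ℂ)
      = 2 * Real.pi * Complex.I * ((n % q : ℕ) : ℂ) / (q : ℂ) + ((n / q : ℕ) : ℂ) * (2 * Real.pi * Complex.I) := by
    field_simp
  rw [this, Complex.exp_add]
  have h1 : Complex.exp (((n / q : ℕ) : ℂ) * (2 * Real.pi * Complex.I)) = 1 := by
    have := Complex.exp_int_mul_two_pi_mul_I ((n / q : ℕ) : ℤ)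
    simp only [Int.cast_natCast] at this
    exact this
  rw [h1, mul_one]

lemma Ee_add (q : ℕ) (hq1 : 0 < q) (x y : ZMod q) : Ee q (x + y) = Ee q x * Ee q y := by
  haveI : NeZero q := ⟨hq1.ne'⟩
  have hxy : x + y = (((x.val + y.val : ℕ)) : ZMod q) := by
    push_cast
    simp [ZMod.natCast_val, ZMod.cast_id]
  rw [hxy, ← Ee_natCast q hq1, Ee, Ee, ← Complex.exp_add]
  congr 1
  push_cast
  ring

lemma Ee_ne_zero (q : ℕ) (x : ZMod q) : Ee q x ≠ 0 := Complex.exp_ne_zero _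

lemma Ee_conj (q : ℕ) (x : ZMod q) : (starRingEnd ℂ) (Ee q x) = (Ee q x)⁻¹ := by
  rw [Ee, ← Complex.exp_conj, ← Complex.exp_neg]
  congr 1
  simp only [map_div₀, map_mul, Complex.conj_I, Complex.conj_ofReal, map_ofNat,
    Complex.conj_natCast]
  ring

lemma Ee_sub_mul (q : ℕ) (hq1 : 0 < q) (x y : ZMod q) :
    Ee q x * (starRingEnd ℂ) (Ee q y) = Ee q (x - y) := by
  rw [Ee_conj]
  have : Ee q (x - y) * Ee q y = Ee q x := by rw [← Ee_add q hq1]; ring_nf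
  rw [← this, mul_assoc, mul_inv_cancel₀ (Ee_ne_zero q y), mul_one]

lemma Ee_h2 (q : ℕ) (hq : Even q) (hq1 : 0 < q) :
    Ee q ((q / 2 : ℕ) : ZMod q) = -1 := by
  haveI : NeZero q := ⟨hq1.ne'⟩
  rw [Ee, ZMod.val_natCast, Nat.mod_eq_of_lt (Nat.div_lt_self hq1 one_lt_two)]
  have h2q : (q / 2) * 2 = q := Nat.div_mul_cancel hq.two_dvd
  have hq0 : (q : ℂ) ≠ 0 := Nat.cast_ne_zero.mpr hq1.ne'
  have : 2 * (Real.pi:ℂ) * Complex.I * ((q/2 : ℕ) : ℂ) / (q : ℂ) = Real.pi * Complex.I := by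
    field_simp
    rw [show ((q:ℂ)) = ((q/2 : ℕ):ℂ) * 2 by exact_mod_cast congrArg (Nat.cast : ℕ → ℂ) h2q.symm]
    ring
  rw [this, Complex.exp_pi_mul_I]

lemma zmod2_cases (z : ZMod 2) : z = 0 ∨ z = 1 := by fin_cases z <;> [left; right] <;> rfl

lemma h2_add_h2 (q : ℕ) (hq : Even q) : ((q/2:ℕ) : ZMod q) + ((q/2:ℕ) : ZMod q) = 0 := by
  rw [← Nat.cast_add]
  have : q / 2 + q / 2 = q := by obtain ⟨r, rfl⟩ := hq; omega
  rw [this, ZMod.natCast_self]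

lemma grand_diff (q m k : ℕ) (hq : Even q) (π : ℕ → Fin m)
    (hπInj : Set.InjOn π (Set.Iio (m - k)))
    (iI : ℕ → Fin m) (cc : ℕ → ZMod q)
    (y z y' z' : Fin m → ZMod 2) (pos : ℕ) (hpos : pos + 1 < m - k)
    (hprev : ∀ t ≤ pos, y (π t) = z (π t))
    (hdiff : y (π (pos + 1)) ≠ z (π (pos + 1)))
    (hy' : ∀ s, y' s = if s = π pos then y s + 1 else y s)
    (hz' : ∀ s, z' s = if s = π pos then z s + 1 else z s) :
    (((q/2:ℕ):ZMod q) * ((∑ t ∈ Finset.range (m-k-1), (y' (π t)).val * (y' (π (t+1))).val : ℕ) : ZMod q)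
       + ∑ t ∈ Finset.range (m-k), cc t * ((y' (iI t)).val : ZMod q))
    + (((q/2:ℕ):ZMod q) * ((∑ t ∈ Finset.range (m-k-1), (z (π t)).val * (z (π (t+1))).val : ℕ) : ZMod q)
       + ∑ t ∈ Finset.range (m-k), cc t * ((z (iI t)).val : ZMod q))
    = ((((q/2:ℕ):ZMod q) * ((∑ t ∈ Finset.range (m-k-1), (z' (π t)).val * (z' (π (t+1))).val : ℕ) : ZMod q)
       + ∑ t ∈ Finset.range (m-k), cc t * ((z' (iI t)).val : ZMod q))
    + (((q/2:ℕ):ZMod q) * ((∑ t ∈ Finset.range (m-k-1), (y (π t)).val * (y (π (t+1))).val : ℕ) : ZMod q)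
       + ∑ t ∈ Finset.range (m-k), cc t * ((y (iI t)).val : ZMod q)))
    + ((q/2:ℕ):ZMod q) := by
  set h2 : ZMod q := ((q/2:ℕ):ZMod q) with hh2
  -- basic coordinate facts
  have hpp1 : π (pos + 1) ≠ π pos := by
    intro h
    have := hπInj (by simp only [Set.mem_Iio]; omega) (by simp only [Set.mem_Iio]; omega) h
    omega
  have hupos : y (π pos) = z (π pos) := hprev pos le_rfl
  -- linear part
  have key3 : (∑ t ∈ Finset.range (m-k), cc t * ((y' (iI t)).val : ZMod q))
      + (∑ t ∈ Finset.range (m-k), cc t * ((z (iI t)).val : ZMod q))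
      = (∑ t ∈ Finset.range (m-k), cc t * ((z' (iI t)).val : ZMod q))
      + (∑ t ∈ Finset.range (m-k), cc t * ((y (iI t)).val : ZMod q)) := by
    rw [← Finset.sum_add_distrib, ← Finset.sum_add_distrib]
    refine Finset.sum_congr rfl fun t ht => ?_
    by_cases h : iI t = π pos
    · rw [hy' (iI t), hz' (iI t), if_pos h, if_pos h, h, hupos]
      try ring
    · rw [hy' (iI t), hz' (iI t), if_neg h, if_neg h]
      try ring
  -- quadratic part, terms away from pos
  have hposmem : pos ∈ Finset.range (m-k-1) := by
    simp only [Finset.mem_range]; omega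
  have key1 : (∑ t ∈ (Finset.range (m-k-1)).erase pos, (y' (π t)).val * (y' (π (t+1))).val)
      + (∑ t ∈ (Finset.range (m-k-1)).erase pos, (z (π t)).val * (z (π (t+1))).val)
      = (∑ t ∈ (Finset.range (m-k-1)).erase pos, (z' (π t)).val * (z' (π (t+1))).val)
      + (∑ t ∈ (Finset.range (m-k-1)).erase pos, (y (π t)).val * (y (π (t+1))).val) := by
    rw [← Finset.sum_add_distrib, ← Finset.sum_add_distrib]
    refine Finset.sum_congr rfl fun t ht => ?_
    rw [Finset.mem_erase, Finset.mem_range] at ht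
    obtain ⟨htpos, htlt⟩ := ht
    have ht1 : π t ≠ π pos := by
      intro h
      exact htpos (hπInj (by simp only [Set.mem_Iio]; omega) (by simp only [Set.mem_Iio]; omega) h)
    by_cases h : t + 1 = pos
    · -- neighbor below pos
      have h2' : π (t+1) = π pos := by rw [h]
      rw [hy' (π t), hz' (π t), if_neg ht1, if_neg ht1,
        hy' (π (t+1)), hz' (π (t+1)), if_pos h2', if_pos h2']
      have e1 : y (π t) = z (π t) := hprev t (by omega)
      have e2 : y (π (t+1)) = z (π (t+1)) := by rw [h]; exact hupos
      rw [e1, e2]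
      try ring
    · have ht2 : π (t+1) ≠ π pos := by
        intro hh
        exact h (hπInj (by simp only [Set.mem_Iio]; omega) (by simp only [Set.mem_Iio]; omega) hh)
      rw [hy' (π t), hz' (π t), if_neg ht1, if_neg ht1,
        hy' (π (t+1)), hz' (π (t+1)), if_neg ht2, if_neg ht2]
      try ring
  -- quadratic part, the term at pos
  have key2 : h2 * (((y' (π pos)).val * (y' (π (pos+1))).val
        + (z (π pos)).val * (z (π (pos+1))).val : ℕ) : ZMod q)
      = h2 * (((z' (π pos)).val * (z' (π (pos+1))).val
        + (y (π pos)).val * (y (π (pos+1))).val : ℕ) : ZMod q) + h2 := by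
    have hadd := h2_add_h2 q hq
    rw [← hh2] at hadd
    rw [hy' (π pos), hz' (π pos), if_pos rfl, if_pos rfl,
      hy' (π (pos+1)), hz' (π (pos+1)), if_neg hpp1, if_neg hpp1, hupos]
    have V01 : ((0+1 : ZMod 2)).val = 1 := rfl
    have V11 : ((1+1 : ZMod 2)).val = 0 := rfl
    have V0 : ((0 : ZMod 2)).val = 0 := rfl
    have V1 : ((1 : ZMod 2)).val = 1 := rfl
    rcases zmod2_cases (z (π pos)) with hu | hu <;>
      rcases zmod2_cases (y (π (pos+1))) with hv | hv <;>
        rcases zmod2_cases (z (π (pos+1))) with hw | hw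
    all_goals first
      | exact absurd (hv.trans hw.symm) hdiff
      | (simp only [hu, hv, hw, V0, V1, V01, V11]; push_cast; linear_combination -hadd)
      | (simp only [hu, hv, hw, V0, V1, V01, V11]; push_cast; ring)
  -- assembly
  have e1 := Finset.sum_erase_add (Finset.range (m-k-1))
    (fun t => (y' (π t)).val * (y' (π (t+1))).val) hposmem
  have e2 := Finset.sum_erase_add (Finset.range (m-k-1))
    (fun t => (z (π t)).val * (z (π (t+1))).val) hposmem
  have e3 := Finset.sum_erase_add (Finset.range (m-k-1))
    (fun t => (z' (π t)).val * (z' (π (t+1))).val) hposmem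
  have e4 := Finset.sum_erase_add (Finset.range (m-k-1))
    (fun t => (y (π t)).val * (y (π (t+1))).val) hposmem
  rw [← e1, ← e2, ← e3, ← e4]
  push_cast
  have key1' : ((∑ t ∈ (Finset.range (m-k-1)).erase pos, (y' (π t)).val * (y' (π (t+1))).val : ℕ) : ZMod q)
      + ((∑ t ∈ (Finset.range (m-k-1)).erase pos, (z (π t)).val * (z (π (t+1))).val : ℕ) : ZMod q)
      = ((∑ t ∈ (Finset.range (m-k-1)).erase pos, (z' (π t)).val * (z' (π (t+1))).val : ℕ) : ZMod q)
      + ((∑ t ∈ (Finset.range (m-k-1)).erase pos, (y (π t)).val * (y (π (t+1))).val : ℕ) : ZMod q) := by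
    rw [← Nat.cast_add, ← Nat.cast_add, key1]
  push_cast at key1' key2
  linear_combination h2 * key1' + key2 + key3

lemma bits_xor_pow {m : ℕ} (i : ℕ) (t s : Fin m) :
    bits m (i ^^^ 2^(t:ℕ)) s = if s = t then bits m i s + 1 else bits m i s := by
  unfold bits
  rw [Nat.testBit_xor, Nat.testBit_two_pow]
  by_cases h : s = t
  · subst h
    rw [if_pos rfl]
    have hd : (decide ((s:ℕ) = (s:ℕ))) = true := by simp
    rw [hd]
    cases hb : i.testBit (s:ℕ) <;> simp [hb] <;> decide
  · have hne : (decide ((t:ℕ) = (s:ℕ))) = false := by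
      simp only [decide_eq_false_iff_not]
      exact fun hh => h (Fin.ext hh.symm)
    rw [if_neg h, hne]
    cases hb : i.testBit (s:ℕ) <;> simp [hb]

lemma bits_eq_iff {m : ℕ} (i j : ℕ) (s : Fin m) :
    bits m i s = bits m j s ↔ i.testBit (s:ℕ) = j.testBit (s:ℕ) := by
  unfold bits
  cases hb : i.testBit (s:ℕ) <;> cases hc : j.testBit (s:ℕ) <;> simp <;> decide

theorem stmt_aux (q m k : ℕ) (hq : Even q) (hq1 : 0 < q) (hkm : k ≤ m)
    (iI : ℕ → Fin m) (jJ : Fin k → Fin m)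
    (hjInj : Function.Injective jJ)
    (hdisj : ∀ a < m - k, ∀ b : Fin k, iI a ≠ jJ b)
    (hcover : ∀ v : Fin m, (∃ a < m - k, iI a = v) ∨ ∃ b : Fin k, jJ b = v)
    (d : Fin k → ZMod 2)
    (f : (Fin m → ZMod 2) → ZMod q)
    (π : ℕ → Fin m) (hπInj : Set.InjOn π (Set.Iio (m - k)))
    (hπrange : π '' Set.Iio (m - k) = iI '' Set.Iio (m - k))
    (c : ℕ → ZMod q) (c0 : ZMod q)
    (hf : ∀ y : Fin m → ZMod 2, (∀ b : Fin k, y (jJ b) = d b) →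
      f y = ((q / 2 : ℕ) : ZMod q) *
              ((∑ α ∈ Finset.range (m - k - 1), (y (π α)).val * (y (π (α + 1))).val : ℕ) : ZMod q)
            + (∑ α ∈ Finset.range (m - k), c α * ((y (iI α)).val : ZMod q)) + c0)
    (a : Fin m) (ha : a = π 0) (c' : ZMod q)
    (ℓ : ℤ) (hℓ : ℓ ≠ 0) :
    autoCorr (2 ^ m) (restrictVec m k jJ d (polyVec m f)) ℓ
      + autoCorr (2 ^ m) (restrictVec m k jJ d
          (polyVec m (fun y => f y + ((q / 2 : ℕ) : ZMod q) * ((y a).val : ZMod q) + c'))) ℓ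
      = 0 := by
  classical
  set h2 : ZMod q := ((q / 2 : ℕ) : ZMod q) with hh2
  have hadd : h2 + h2 = 0 := h2_add_h2 q hq
  have hEh2 : Ee q h2 = -1 := Ee_h2 q hq hq1
  set f' : (Fin m → ZMod 2) → ZMod q :=
    fun y => f y + h2 * ((y a).val : ZMod q) + c' with hf'
  set G : ℕ → ℂ := restrictVec m k jJ d (polyVec m f) with hG
  set G' : ℕ → ℂ := restrictVec m k jJ d (polyVec m f') with hG'
  set n : ℕ := 2 ^ m with hn
  -- the support predicate
  set supp : ℕ → Prop := fun i => ∀ b : Fin k, bits m i (jJ b) = d b with hsupp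
  have hGpos : ∀ i, supp i → G i = Ee q (f (bits m i)) := by
    intro i h
    rw [hG, restrictVec, if_pos h]
    rfl
  have hGneg : ∀ i, ¬ supp i → G i = 0 := by
    intro i h
    rw [hG, restrictVec, if_neg h]
  have hG'pos : ∀ i, supp i → G' i = Ee q (f' (bits m i)) := by
    intro i h
    rw [hG', restrictVec, if_pos h]
    rfl
  have hG'neg : ∀ i, ¬ supp i → G' i = 0 := by
    intro i h
    rw [hG', restrictVec, if_neg h]
  -- the combined term over pairs
  set T : ℕ × ℕ → ℂ := fun p =>
    if (p.1 : ℤ) = (p.2 : ℤ) + ℓ then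
      G p.1 * (starRingEnd ℂ) (G p.2) + G' p.1 * (starRingEnd ℂ) (G' p.2) else 0 with hT
  have combined : autoCorr n G ℓ + autoCorr n G' ℓ
      = ∑ p ∈ Finset.range n ×ˢ Finset.range n, T p := by
    rw [Finset.sum_product]
    unfold autoCorr crossCorr
    rw [← Finset.sum_add_distrib]
    refine Finset.sum_congr rfl fun i _ => ?_
    rw [← Finset.sum_add_distrib]
    refine Finset.sum_congr rfl fun j _ => ?_
    rw [hT]
    simp only [ite_add_ite, add_zero]
  rw [combined]
  -- the matching condition
  set C : ℕ × ℕ → Prop := fun p =>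
    ((p.1 : ℤ) = (p.2 : ℤ) + ℓ) ∧ supp p.1 ∧ supp p.2 ∧ bits m p.1 a = bits m p.2 a with hC
  set av : ℕ × ℕ → ℕ := fun p =>
    sInf {β | β < m - k ∧ bits m p.1 (π β) ≠ bits m p.2 (π β)} with hav
  set σ : ℕ × ℕ → ℕ × ℕ := fun p =>
    if C p then (p.1 ^^^ 2 ^ ((π (av p - 1) : Fin m) : ℕ), p.2 ^^^ 2 ^ ((π (av p - 1) : Fin m) : ℕ))
    else p with hσ
  -- basic consequences of the matching condition
  have main : ∀ p : ℕ × ℕ, p.1 ∈ Finset.range n → p.2 ∈ Finset.range n → C p →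
      1 ≤ av p ∧ av p < m - k ∧
      bits m p.1 (π (av p)) ≠ bits m p.2 (π (av p)) ∧
      (∀ t ≤ av p - 1, bits m p.1 (π t) = bits m p.2 (π t)) := by
    rintro ⟨i, j⟩ hi hj hCp
    obtain ⟨h1, h2i, h2j, h3⟩ := hCp
    simp only at h1 h3 ⊢
    rw [Finset.mem_range] at hi hj
    have hij : i ≠ j := by
      intro h
      apply hℓ
      omega
    -- there is a differing coordinate, and it lies in the image of π
    have hSne : {β | β < m - k ∧ bits m i (π β) ≠ bits m j (π β)}.Nonempty := by
      obtain ⟨t, ht⟩ : ∃ t, i.testBit t ≠ j.testBit t := by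
        by_contra hcon
        push_neg at hcon
        exact hij (Nat.eq_of_testBit_eq fun t => hcon t)
      have htm : t < m := by
        by_contra htm
        push_neg at htm
        rw [Nat.testBit_lt_two_pow (lt_of_lt_of_le hi (Nat.pow_le_pow_right (by norm_num) htm)),
          Nat.testBit_lt_two_pow (lt_of_lt_of_le hj (Nat.pow_le_pow_right (by norm_num) htm))] at ht
        exact ht rfl
      set v : Fin m := ⟨t, htm⟩ with hv
      have hbv : bits m i v ≠ bits m j v := by
        rw [Ne, bits_eq_iff]
        exact ht
      rcases hcover v with ⟨γ, hγ, hγv⟩ | ⟨b, hb⟩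
      · have : v ∈ iI '' Set.Iio (m - k) := ⟨γ, by simpa using hγ, hγv⟩
        rw [← hπrange] at this
        obtain ⟨β, hβ, hβv⟩ := this
        exact ⟨β, by simpa using hβ, by rw [hβv]; exact hbv⟩
      · exfalso
        apply hbv
        rw [← hb, h2i b, h2j b]
    have havij : av (i, j) = sInf {β | β < m - k ∧ bits m i (π β) ≠ bits m j (π β)} := by
      simp only [hav]
    have hmem := Nat.sInf_mem hSne
    rw [← havij] at hmem
    obtain ⟨hlt, hne⟩ : av (i, j) < m - k ∧
        bits m i (π (av (i, j))) ≠ bits m j (π (av (i, j))) := hmem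
    have hav1 : 1 ≤ av (i, j) := by
      rcases Nat.eq_zero_or_pos (av (i, j)) with h0 | h0
      · exfalso
        apply hne
        rw [h0, ← ha, h3]
      · exact h0
    refine ⟨hav1, hlt, hne, fun t htle => ?_⟩
    by_contra hcon
    have : t ∈ {β | β < m - k ∧ bits m i (π β) ≠ bits m j (π β)} := ⟨by omega, hcon⟩
    have := Nat.sInf_le this
    rw [← havij] at this
    omega
  -- vanishing of terms outside the matching condition
  have Tzero : ∀ p : ℕ × ℕ, ¬ C p → T p = 0 := by
    rintro ⟨i, j⟩ hCp
    rw [hT]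
    simp only
    by_cases h1 : (i : ℤ) = (j : ℤ) + ℓ
    · rw [if_pos h1]
      by_cases h2i : supp i
      · by_cases h2j : supp j
        · -- bits must differ at a
          have h3 : bits m i a ≠ bits m j a := by
            intro h3
            exact hCp ⟨h1, h2i, h2j, h3⟩
          rw [hGpos i h2i, hGpos j h2j, hG'pos i h2i, hG'pos j h2j,
            Ee_sub_mul q hq1, Ee_sub_mul q hq1]
          have hdd : f' (bits m i) - f' (bits m j)
              = (f (bits m i) - f (bits m j)) + h2 := by
            rw [hf']
            simp only
            have V0 : (((0 : ZMod 2)).val : ZMod q) = 0 := by norm_num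
            have V1 : (((1 : ZMod 2)).val : ZMod q) = 1 := by
              have : ((1 : ZMod 2)).val = 1 := rfl
              rw [this]; norm_num
            rcases zmod2_cases (bits m i a) with hu | hu <;>
              rcases zmod2_cases (bits m j a) with hv | hv
            · exact absurd (hu.trans hv.symm) h3
            · rw [hu, hv, V0, V1]
              linear_combination -hadd
            · rw [hu, hv, V0, V1]
              ring
            · exact absurd (hu.trans hv.symm) h3
          rw [hdd, Ee_add q hq1, hEh2]
          ring
        · rw [hGneg j h2j, hG'neg j h2j]
          simp
      · rw [hGneg i h2i, hG'neg i h2i]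
        simp
    · rw [if_neg h1]
  -- the key facts about the flip
  have key : ∀ p : ℕ × ℕ, p.1 ∈ Finset.range n → p.2 ∈ Finset.range n → C p →
      σ p = (p.1 ^^^ 2 ^ ((π (av p - 1) : Fin m) : ℕ), p.2 ^^^ 2 ^ ((π (av p - 1) : Fin m) : ℕ)) ∧
      σ p ∈ Finset.range n ×ˢ Finset.range n ∧ C (σ p) ∧ av (σ p) = av p ∧
      T (σ p) = - T p := by
    rintro ⟨i, j⟩ hi hj hCp
    obtain ⟨hav1, havlt, havne, hprev⟩ := main (i, j) hi hj hCp
    obtain ⟨h1, h2i, h2j, h3⟩ := hCp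
    simp only at h1 h3 hav1 havlt havne hprev ⊢
    rw [Finset.mem_range] at hi hj
    set pos : ℕ := av (i, j) - 1 with hposdef
    set Pf : Fin m := π pos with hPf
    set P : ℕ := (Pf : ℕ) with hPdef
    set i' : ℕ := i ^^^ 2 ^ P with hi'def
    set j' : ℕ := j ^^^ 2 ^ P with hj'def
    have hposadd : pos + 1 = av (i, j) := by omega
    have hposlt : pos + 1 < m - k := by omega
    -- bits of the flipped points
    have hbi' : ∀ s : Fin m, bits m i' s = if s = Pf then bits m i s + 1 else bits m i s :=
      fun s => bits_xor_pow i Pf s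
    have hbj' : ∀ s : Fin m, bits m j' s = if s = Pf then bits m j s + 1 else bits m j s :=
      fun s => bits_xor_pow j Pf s
    -- Pf lies in the image of iI
    have hPfI : ∃ γ < m - k, iI γ = Pf := by
      have : Pf ∈ π '' Set.Iio (m - k) := ⟨pos, by simp only [Set.mem_Iio]; omega, rfl⟩
      rw [hπrange] at this
      obtain ⟨γ, hγ, hγv⟩ := this
      exact ⟨γ, by simpa using hγ, hγv⟩
    have hPfJ : ∀ b : Fin k, jJ b ≠ Pf := by
      obtain ⟨γ, hγ, hγv⟩ := hPfI
      intro b hb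
      exact hdisj γ hγ b (by rw [hγv, hb])
    -- supports are preserved
    have hsi' : supp i' := by
      intro b
      rw [hbi' (jJ b), if_neg (hPfJ b)]
      exact h2i b
    have hsj' : supp j' := by
      intro b
      rw [hbj' (jJ b), if_neg (hPfJ b)]
      exact h2j b
    -- sizes
    have h2Pm : 2 ^ P < 2 ^ m := Nat.pow_lt_pow_right (by norm_num) Pf.isLt
    have hi'lt : i' < n := by
      rw [hi'def, hn]
      exact Nat.xor_lt_two_pow hi h2Pm
    have hj'lt : j' < n := by
      rw [hj'def, hn]
      exact Nat.xor_lt_two_pow hj h2Pm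
    -- displacement is preserved
    have htb : i.testBit P = j.testBit P := by
      rw [← bits_eq_iff (s := Pf)]
      exact hprev pos le_rfl
    have harith : (i' : ℤ) = (j' : ℤ) + ℓ := by
      have := xor_pair_add (i := i) (j := j) htb
      rw [← hi'def, ← hj'def] at this
      have hz : (i' : ℤ) + j = (j' : ℤ) + i := by exact_mod_cast this
      omega
    -- bits at a are still equal
    have h3' : bits m i' a = bits m j' a := by
      rw [hbi' a, hbj' a]
      by_cases hc : a = Pf
      · rw [if_pos hc, if_pos hc, h3]
      · rw [if_neg hc, if_neg hc, h3]
    have hC' : C (i', j') := ⟨harith, hsi', hsj', h3'⟩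
    -- the differing set is preserved
    have havinv : av (i', j') = av (i, j) := by
      have hsets : {β | β < m - k ∧ bits m i' (π β) ≠ bits m j' (π β)}
          = {β | β < m - k ∧ bits m i (π β) ≠ bits m j (π β)} := by
        ext β
        simp only [Set.mem_setOf_eq, and_congr_right_iff]
        intro hβ
        rw [hbi' (π β), hbj' (π β)]
        by_cases hc : π β = Pf
        · rw [if_pos hc, if_pos hc]
          constructor
          · intro h hcon
            exact h (by rw [hcon])
          · intro h hcon
            exact h (by
              have := add_right_cancel hcon
              rw [this])
        · rw [if_neg hc, if_neg hc]
      simp only [hav, hsets]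
    have hσp : σ (i, j) = (i', j') := by
      rw [hσ]
      simp only
      rw [if_pos ⟨h1, h2i, h2j, h3⟩]
    refine ⟨hσp, ?_, by rw [hσp]; exact hC', by rw [hσp]; exact havinv, ?_⟩
    · rw [hσp, Finset.mem_product]
      exact ⟨Finset.mem_range.mpr hi'lt, Finset.mem_range.mpr hj'lt⟩
    -- the sign flip of the term
    rw [hσp]
    have hTp : T (i, j) = Ee q (f (bits m i) - f (bits m j))
        + Ee q (f' (bits m i) - f' (bits m j)) := by
      rw [hT]
      simp only
      rw [if_pos h1, hGpos i h2i, hGpos j h2j, hG'pos i h2i, hG'pos j h2j,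
        Ee_sub_mul q hq1, Ee_sub_mul q hq1]
    have hTp' : T (i', j') = Ee q (f (bits m i') - f (bits m j'))
        + Ee q (f' (bits m i') - f' (bits m j')) := by
      rw [hT]
      simp only
      rw [if_pos harith, hGpos i' hsi', hGpos j' hsj', hG'pos i' hsi', hG'pos j' hsj',
        Ee_sub_mul q hq1, Ee_sub_mul q hq1]
    -- the master difference identity for f
    have hgrand := grand_diff q m k hq π hπInj iI c
      (bits m i) (bits m j) (bits m i') (bits m j') pos hposlt
      (fun t ht => hprev t ht) (by rw [hposadd]; exact havne) hbi' hbj'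
    rw [← hh2] at hgrand
    have hfyi := hf (bits m i) h2i
    have hfyj := hf (bits m j) h2j
    have hfyi' := hf (bits m i') hsi'
    have hfyj' := hf (bits m j') hsj'
    have keyf : f (bits m i') - f (bits m j') = (f (bits m i) - f (bits m j)) + h2 := by
      rw [hfyi, hfyj, hfyi', hfyj']
      linear_combination hgrand
    -- the same for f'
    have haext : (((bits m i' a).val : ZMod q)) + ((bits m j a).val : ZMod q)
        = (((bits m j' a).val : ZMod q)) + ((bits m i a).val : ZMod q) := by
      rw [hbi' a, hbj' a]
      by_cases hc : a = Pf
      · rw [if_pos hc, if_pos hc, h3]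
      · rw [if_neg hc, if_neg hc, h3]
    have keyf' : f' (bits m i') - f' (bits m j') = (f' (bits m i) - f' (bits m j)) + h2 := by
      rw [hf']
      simp only
      linear_combination keyf + h2 * haext
    rw [hTp, hTp', keyf, keyf', Ee_add q hq1, Ee_add q hq1, hEh2]
    ring
  -- now apply the involution principle
  refine Finset.sum_involution (fun p _ => σ p) ?_ ?_ ?_ ?_
  · intro p hp
    show T p + T (σ p) = 0
    rw [Finset.mem_product] at hp
    by_cases hCp : C p
    · obtain ⟨-, -, -, -, hTσ⟩ := key p hp.1 hp.2 hCp
      rw [hTσ]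
      ring
    · have h0 := Tzero p hCp
      have hσp : σ p = p := by
        rw [hσ]
        simp only
        rw [if_neg hCp]
      rw [hσp, h0]
      ring
  · intro p hp hTne
    show σ p ≠ p
    rw [Finset.mem_product] at hp
    by_cases hCp : C p
    · obtain ⟨hσp, -, -, -, -⟩ := key p hp.1 hp.2 hCp
      rw [hσp]
      intro hcon
      have : p.1 ^^^ 2 ^ ((π (av p - 1) : Fin m) : ℕ) = p.1 := congrArg Prod.fst hcon
      have h2ne : (2 : ℕ) ^ ((π (av p - 1) : Fin m) : ℕ) ≠ 0 := by positivity
      apply h2ne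
      have hxx := congrArg (fun x => x ^^^ p.1) this
      simp only [Nat.xor_comm p.1 _] at hxx
      calc 2 ^ ((π (av p - 1) : Fin m) : ℕ)
          = 2 ^ ((π (av p - 1) : Fin m) : ℕ) ^^^ p.1 ^^^ p.1 := by rw [Nat.xor_xor_cancel_right]
        _ = p.1 ^^^ p.1 := by rw [hxx]
        _ = 0 := by simp [Nat.xor_self]
    · exact absurd (Tzero p hCp) hTne
  · intro p hp
    show σ p ∈ Finset.range n ×ˢ Finset.range n
    rw [Finset.mem_product] at hp
    by_cases hCp : C p
    · obtain ⟨-, hmem, -, -, -⟩ := key p hp.1 hp.2 hCp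
      exact hmem
    · have hσp : σ p = p := by
        rw [hσ]
        simp only
        rw [if_neg hCp]
      rw [hσp, Finset.mem_product]
      exact hp
  · intro p hp
    show σ (σ p) = p
    rw [Finset.mem_product] at hp
    by_cases hCp : C p
    · obtain ⟨hσp, hmem, hC', havinv, -⟩ := key p hp.1 hp.2 hCp
      rw [Finset.mem_product] at hmem
      obtain ⟨hσ1, hσ2, -, havinv2, -⟩ := key (σ p) (by rw [hσp] at hmem ⊢; exact hmem.1)
        (by rw [hσp] at hmem ⊢; exact hmem.2) hC'
      rw [hσ1, havinv, hσp]
      ext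
      · simp only
        rw [Nat.xor_xor_cancel_right]
      · simp only
        rw [Nat.xor_xor_cancel_right]
    · have hσp : σ p = p := by
        rw [hσ]
        simp only
        rw [if_neg hCp]
      rw [hσp, hσp]

/-- Theorem 1 (Golay pairs from restricted quadratic forms): if `f|_{x=d}` is
`(q/2)·∑_α x_{π(α)}x_{π(α+1)} + ∑_α c_α x_{i_α} + c` for a bijection `π` of `{0,…,m-k-1}`
onto `I`, and `a = π(0)` or `a = π(m-k-1)`, then `F|_{x=d}` and `F'|_{x=d}` form a Golay
complementary pair, where `F, F'` are the polyphase vectors of `f` and `f + (q/2)x_a + c'`. -/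
theorem stmt_2 (q m k : ℕ) (hq : Even q) (hq1 : 0 < q) (hkm : k ≤ m)
    (iI : ℕ → Fin m) (jJ : Fin k → Fin m)
    (hiInj : Set.InjOn iI (Set.Iio (m - k))) (hjInj : Function.Injective jJ)
    (hdisj : ∀ a < m - k, ∀ b : Fin k, iI a ≠ jJ b)
    (hcover : ∀ v : Fin m, (∃ a < m - k, iI a = v) ∨ ∃ b : Fin k, jJ b = v)
    (d : Fin k → ZMod 2)
    (f : (Fin m → ZMod 2) → ZMod q)
    (π : ℕ → Fin m) (hπInj : Set.InjOn π (Set.Iio (m - k)))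
    (hπrange : π '' Set.Iio (m - k) = iI '' Set.Iio (m - k))
    (c : ℕ → ZMod q) (c0 : ZMod q)
    (hf : ∀ y : Fin m → ZMod 2, (∀ b : Fin k, y (jJ b) = d b) →
      f y = ((q / 2 : ℕ) : ZMod q) *
              ((∑ α ∈ Finset.range (m - k - 1), (y (π α)).val * (y (π (α + 1))).val : ℕ) : ZMod q)
            + (∑ α ∈ Finset.range (m - k), c α * ((y (iI α)).val : ZMod q)) + c0)
    (a : Fin m) (ha : a = π 0 ∨ a = π (m - k - 1)) (c' : ZMod q)
    (ℓ : ℤ) (hℓ : ℓ ≠ 0) :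
    autoCorr (2 ^ m) (restrictVec m k jJ d (polyVec m f)) ℓ
      + autoCorr (2 ^ m) (restrictVec m k jJ d
          (polyVec m (fun y => f y + ((q / 2 : ℕ) : ZMod q) * ((y a).val : ZMod q) + c'))) ℓ
      = 0 := by
  rcases ha with ha | ha
  · exact stmt_aux q m k hq hq1 hkm iI jJ hjInj hdisj hcover d f π hπInj hπrange c c0 hf
      a ha c' ℓ hℓ
  · set π' : ℕ → Fin m := fun t => π (m - k - 1 - t) with hπ'
    have hquad : ∀ y : Fin m → ZMod 2,
        (∑ t ∈ Finset.range (m - k - 1), (y (π' t)).val * (y (π' (t + 1))).val)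
          = ∑ t ∈ Finset.range (m - k - 1), (y (π t)).val * (y (π (t + 1))).val := by
      intro y
      rw [← Finset.sum_range_reflect (fun t => (y (π t)).val * (y (π (t + 1))).val) (m - k - 1)]
      refine Finset.sum_congr rfl fun t ht => ?_
      rw [Finset.mem_range] at ht
      simp only [hπ']
      have e1 : m - k - 1 - (t + 1) = m - k - 1 - 1 - t := by omega
      have e2 : m - k - 1 - 1 - t + 1 = m - k - 1 - t := by omega
      rw [e1, e2]
      ring
    refine stmt_aux q m k hq hq1 hkm iI jJ hjInj hdisj hcover d f π' ?_ ?_ c c0 ?_ a ?_ c' ℓ hℓ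
    · intro s hs t ht h
      simp only [Set.mem_Iio] at hs ht
      simp only [hπ'] at h
      by_cases hmk : m - k = 0
      · omega
      · have := hπInj (Set.mem_Iio.mpr (by omega : m - k - 1 - s < m - k))
          (Set.mem_Iio.mpr (by omega : m - k - 1 - t < m - k)) h
        omega
    · have hrange' : π' '' Set.Iio (m - k) = π '' Set.Iio (m - k) := by
        ext v
        simp only [Set.mem_image, Set.mem_Iio, hπ']
        constructor
        · rintro ⟨t, ht, rfl⟩
          exact ⟨m - k - 1 - t, by omega, rfl⟩
        · rintro ⟨β, hβ, rfl⟩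
          exact ⟨m - k - 1 - β, by omega, by congr 1; omega⟩
      rw [hrange', hπrange]
    · intro y hy
      rw [hf y hy, hquad y]
    · show a = π' 0
      simp only [hπ']
      rw [Nat.sub_zero]
      exact ha
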